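/- The determinant of the 3×3 symmetric matrix Γ₁₂ with entries Γ₁₂(θ₁,θ₁)=−9θ₁²−θ₂/2+1/2, Γ₁₂(θ₁,θ₂)=−12θ₁θ₂+4θ₁, Γ₁₂(θ₁,η)=−18θ₁η, Γ₁₂(θ₂,θ₂)=48θ₁²−16θ₂²+24θ₂−8, Γ₁₂(θ₂,η)=−24θ₂η+16η, Γ₁₂(η,η)=−54θ₁²θ₂+18θ₁²−3θ₂²−36η²+4θ₂−1 factorizes as 4(3θ₂−1)(18θ₁²+θ₂−1)(108θ₁⁴+36θ₁²θ₂−2θ₂³−20θ₁²+5θ₂²+4η²−4θ₂+1). -/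
import Mathlib

theorem stmt17 (θ₁ θ₂ η : ℝ) :
    Matrix.det !![-9 * θ₁ ^ 2 - θ₂ / 2 + 1 / 2, -12 * θ₁ * θ₂ + 4 * θ₁, -18 * θ₁ * η;
                  -12 * θ₁ * θ₂ + 4 * θ₁, 48 * θ₁ ^ 2 - 16 * θ₂ ^ 2 + 24 * θ₂ - 8,
                    -24 * θ₂ * η + 16 * η;
                  -18 * θ₁ * η, -24 * θ₂ * η + 16 * η,
                    -54 * θ₁ ^ 2 * θ₂ + 18 * θ₁ ^ 2 - 3 * θ₂ ^ 2 - 36 * η ^ 2 + 4 * θ₂ - 1]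
      = 4 * (3 * θ₂ - 1) * (18 * θ₁ ^ 2 + θ₂ - 1)
          * (108 * θ₁ ^ 4 + 36 * θ₁ ^ 2 * θ₂ - 2 * θ₂ ^ 3 - 20 * θ₁ ^ 2 + 5 * θ₂ ^ 2
              + 4 * η ^ 2 - 4 * θ₂ + 1) := by
  simp [Matrix.det_fin_three]
  ring
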